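/- If y = f_u(x), then ∏_{i=1}^{n} (u_i + x_i)/x_i = ∏_{i=1}^{n} (u_i + y_i)/u_i. -/

import Mathlib

/- Setting: a semifield `K` (commutative associative addition `add`, multiplicative
abelian group, distributivity), a fixed `u ∈ K^n`, all `n`-tuples extended
`n`-periodically to families indexed by `ℤ`. -/

variable {K : Type*} [CommGroup K]

/-- The nonempty sum `f 0 + f 1 + ⋯ + f r` with respect to the binary operation `add`. -/
def addSum (add : K → K → K) (f : ℕ → K) : ℕ → K
  | 0 => f 0
  | r + 1 => add (addSum add f r) (f (r + 1))

/-- The element `t_{r,j} = Σ_{k=0}^{r} (∏_{i=1}^{k} x_{j+i}) · (∏_{i=k+1}^{r} u_{j+i})`. -/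
def tpoly (add : K → K → K) (u x : ℤ → K) (r : ℕ) (j : ℤ) : K :=
  addSum add
    (fun k => (∏ i ∈ Finset.Icc 1 k, x (j + i)) * ∏ i ∈ Finset.Icc (k + 1) r, u (j + i)) r

open Fin.IntCast in
/-- The `n`-periodic extension of an `n`-tuple to a family indexed by `ℤ`. -/
def extend {n : ℕ} [NeZero n] (v : Fin n → K) : ℤ → K := fun i => v (i : Fin n)

/-- The map `f_u : K^n → K^n`, sending `x` to the `n`-tuple `y` with
`y_i = u_i · (u_{i-1} t_{n-1,i-1}) / (x_{i+1} t_{n-1,i+1})`. -/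
def fu {n : ℕ} [NeZero n] (add : K → K → K) (u : Fin n → K) (x : Fin n → K) : Fin n → K :=
  fun i =>
    u i * (extend u ((i : ℤ) - 1) * tpoly add (extend u) (extend x) (n - 1) ((i : ℤ) - 1)) /
      (extend x ((i : ℤ) + 1) * tpoly add (extend u) (extend x) (n - 1) ((i : ℤ) + 1))

set_option linter.unusedSectionVars false

section AuxLemmas

variable (add : K → K → K)

lemma addSum_congr {f g : ℕ → K} : ∀ {r : ℕ}, (∀ k ≤ r, f k = g k) →
    addSum add f r = addSum add g r
  | 0, h => h 0 le_rfl
  | r+1, h => by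
      simp only [addSum]
      rw [addSum_congr (fun k hk => h k (hk.trans r.le_succ)), h (r+1) le_rfl]

lemma mul_addSum (hdistrib : ∀ a b c : K, a * add b c = add (a * b) (a * c))
    (c : K) (f : ℕ → K) : ∀ r, c * addSum add f r = addSum add (fun k => c * f k) r
  | 0 => rfl
  | r+1 => by simp only [addSum]; rw [hdistrib, mul_addSum hdistrib c f r]

lemma addSum_head (hassoc : ∀ a b c : K, add (add a b) c = add a (add b c))
    (f : ℕ → K) : ∀ r, addSum add f (r+1) = add (f 0) (addSum add (fun k => f (k+1)) r)
  | 0 => rfl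
  | r+1 => by
      have h := addSum_head hassoc f r
      simp only [addSum] at h ⊢
      rw [h, hassoc]

lemma addSum_exchange (hassoc : ∀ a b c : K, add (add a b) c = add a (add b c))
    (hcomm : ∀ a b : K, add a b = add b a) (f g : ℕ → K) (r : ℕ)
    (h0 : f 0 = g 0) (hr : f (r+1) = g (r+1)) :
    add (addSum add f r) (addSum add (fun k => g (k+1)) r)
      = add (addSum add g r) (addSum add (fun k => f (k+1)) r) := by
  cases r with
  | zero => simp only [addSum]; rw [h0, hr]
  | succ r =>
    rw [addSum_head add hassoc f r, addSum_head add hassoc g r]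
    simp only [addSum]
    rw [h0, hr]
    rw [hassoc, hassoc]
    congr 1
    rw [← hassoc, ← hassoc]
    congr 1
    exact hcomm _ _

lemma extend_period {n : ℕ} [NeZero n] (v : Fin n → K) (j : ℤ) :
    extend v (j + n) = extend v j := by
  unfold extend
  congr 1
  push_cast
  exact Fin.ext (by simp)

lemma extend_coe {n : ℕ} [NeZero n] (v : Fin n → K) (i : Fin n) :
    extend v (i : ℤ) = v i := by
  unfold extend
  congr 1
  exact Fin.ext (by simp [Int.emod_eq_of_lt])

lemma prod_range_shift (F : ℤ → K) (n : ℕ) (hn : n ≠ 0) (h : F n = F 0) :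
    ∏ k ∈ Finset.range n, F (k + 1) = ∏ k ∈ Finset.range n, F k := by
  obtain ⟨m, rfl⟩ := Nat.exists_eq_succ_of_ne_zero hn
  rw [Finset.prod_range_succ, Finset.prod_range_succ']
  push_cast at h ⊢
  rw [h]

lemma prod_Icc_one (f : ℤ → K) (j : ℤ) (k : ℕ) :
    ∏ i ∈ Finset.Icc 1 k, f (j + i) = ∏ i ∈ Finset.range k, f (j + 1 + i) := by
  rw [← Finset.Ico_add_one_right_eq_Icc, Finset.prod_Ico_eq_prod_range]
  have hk : k + 1 - 1 = k := by omega
  rw [hk]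
  exact Finset.prod_congr rfl fun i _ => by push_cast; ring_nf

lemma prod_Icc_from (f : ℤ → K) (j : ℤ) (k m : ℕ) :
    ∏ i ∈ Finset.Icc (k+1) m, f (j + i) = ∏ i ∈ Finset.range (m - k), f (j + (k+1) + i) := by
  rw [← Finset.Ico_add_one_right_eq_Icc, Finset.prod_Ico_eq_prod_range]
  have : m + 1 - (k + 1) = m - k := by omega
  rw [this]
  exact Finset.prod_congr rfl fun i _ => by push_cast; ring_nf

lemma tpoly_period {n : ℕ} [NeZero n] (u x : Fin n → K) (r : ℕ) (j : ℤ) :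
    tpoly add (extend u) (extend x) r (j + n) = tpoly add (extend u) (extend x) r j := by
  unfold tpoly
  refine addSum_congr add fun k _ => ?_
  congr 1
  · exact Finset.prod_congr rfl fun i _ => by
      rw [show j + (n:ℤ) + (i:ℤ) = (j + i) + n by ring, extend_period]
  · exact Finset.prod_congr rfl fun i _ => by
      rw [show j + (n:ℤ) + (i:ℤ) = (j + i) + n by ring, extend_period]

lemma tpoly_key {n : ℕ} [NeZero n]
    (hassoc : ∀ a b c : K, add (add a b) c = add a (add b c))
    (hcomm : ∀ a b : K, add a b = add b a)
    (hdistrib : ∀ a b c : K, a * add b c = add (a * b) (a * c))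
    (u x : Fin n → K) (j : ℤ) :
    add (extend u (j-1) * tpoly add (extend u) (extend x) (n-1) (j-1))
        (extend x (j+1) * tpoly add (extend u) (extend x) (n-1) (j+1))
    = add (extend u j * tpoly add (extend u) (extend x) (n-1) j)
        (extend x j * tpoly add (extend u) (extend x) (n-1) j) := by
  have hn : n ≠ 0 := NeZero.ne n
  set U : ℤ → K := extend u with hUdef
  set X : ℤ → K := extend x with hXdef
  set a : ℕ → K := fun k =>
    (∏ i ∈ Finset.range k, X (j + i)) * ∏ i ∈ Finset.range (n - k), U (j + k + i) with ha
  set b : ℕ → K := fun k =>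
    (∏ i ∈ Finset.range k, X (j + 1 + i)) * ∏ i ∈ Finset.range (n - k), U (j + k + 1 + i) with hb
  have h1 : U (j-1) * tpoly add U X (n-1) (j-1) = addSum add a (n-1) := by
    unfold tpoly
    rw [mul_addSum add hdistrib]
    refine addSum_congr add fun k hk => ?_
    rw [prod_Icc_one, prod_Icc_from, ha]
    simp only
    have e1 : ∏ i ∈ Finset.range k, X (j-1+1+(i:ℤ)) = ∏ i ∈ Finset.range k, X (j+i) :=
      Finset.prod_congr rfl fun i _ => by ring_nf
    have e2 : n - k = (n-1-k)+1 := by omega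
    rw [e1, e2, Finset.prod_range_succ]
    have e3 : ∏ i ∈ Finset.range (n-1-k), U (j-1+((k:ℤ)+1)+(i:ℤ))
        = ∏ i ∈ Finset.range (n-1-k), U (j+k+i) :=
      Finset.prod_congr rfl fun i _ => by ring_nf
    have e4 : U (j + (k:ℤ) + ((n-1-k : ℕ):ℤ)) = U (j-1) := by
      have hc : j + (k:ℤ) + ((n-1-k : ℕ):ℤ) = (j - 1) + (n:ℤ) := by
        have : ((n-1-k : ℕ):ℤ) = (n:ℤ) - 1 - (k:ℤ) := by omega
        rw [this]; ring
      rw [hc, hUdef, extend_period]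
    rw [e3, e4]
    ac_rfl
  have h2 : X (j+1) * tpoly add U X (n-1) (j+1) = addSum add (fun k => b (k+1)) (n-1) := by
    unfold tpoly
    rw [mul_addSum add hdistrib]
    refine addSum_congr add fun k hk => ?_
    rw [prod_Icc_one, prod_Icc_from, hb]
    simp only
    have e1 : ∏ i ∈ Finset.range (k+1), X (j + 1 + (i:ℤ))
        = X (j+1) * ∏ i ∈ Finset.range k, X (j+1+1+(i:ℤ)) := by
      rw [Finset.prod_range_succ']
      rw [mul_comm]
      congr 1
      · norm_num
      · exact Finset.prod_congr rfl fun i _ => by push_cast; ring_nf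
    have e2 : ∏ i ∈ Finset.range (n - (k+1)), U (j + ((k:ℤ)+1) + 1 + (i:ℤ))
        = ∏ i ∈ Finset.range (n-1-k), U (j+1+((k:ℤ)+1)+(i:ℤ)) := by
      have : n - (k+1) = n - 1 - k := by omega
      rw [this]
      exact Finset.prod_congr rfl fun i _ => by ring_nf
    push_cast
    rw [e1, e2]
    ac_rfl
  have h3 : U j * tpoly add U X (n-1) j = addSum add b (n-1) := by
    unfold tpoly
    rw [mul_addSum add hdistrib]
    refine addSum_congr add fun k hk => ?_
    rw [prod_Icc_one, prod_Icc_from, hb]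
    simp only
    have e2 : n - k = (n-1-k)+1 := by omega
    rw [e2, Finset.prod_range_succ]
    have e3 : ∏ i ∈ Finset.range (n-1-k), U (j+(k:ℤ)+1+(i:ℤ))
        = ∏ i ∈ Finset.range (n-1-k), U (j+((k:ℤ)+1)+(i:ℤ)) :=
      Finset.prod_congr rfl fun i _ => by ring_nf
    have e4 : U (j + (k:ℤ) + 1 + ((n-1-k : ℕ):ℤ)) = U j := by
      have hc : j + (k:ℤ) + 1 + ((n-1-k : ℕ):ℤ) = j + (n:ℤ) := by
        have : ((n-1-k : ℕ):ℤ) = (n:ℤ) - 1 - (k:ℤ) := by omega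
        rw [this]; ring
      rw [hc, hUdef, extend_period]
    rw [e3, e4]
    ac_rfl
  have h4 : X j * tpoly add U X (n-1) j = addSum add (fun k => a (k+1)) (n-1) := by
    unfold tpoly
    rw [mul_addSum add hdistrib]
    refine addSum_congr add fun k hk => ?_
    rw [prod_Icc_one, prod_Icc_from, ha]
    simp only
    have e1 : ∏ i ∈ Finset.range (k+1), X (j + (i:ℤ))
        = X j * ∏ i ∈ Finset.range k, X (j+1+(i:ℤ)) := by
      rw [Finset.prod_range_succ']
      rw [mul_comm]
      congr 1
      · norm_num
      · exact Finset.prod_congr rfl fun i _ => by push_cast; ring_nf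
    have e2 : ∏ i ∈ Finset.range (n - (k+1)), U (j + ((k:ℤ)+1) + (i:ℤ))
        = ∏ i ∈ Finset.range (n-1-k), U (j+((k:ℤ)+1)+(i:ℤ)) := by
      have : n - (k+1) = n - 1 - k := by omega
      rw [this]
    push_cast
    rw [e1, e2]
    ac_rfl
  have hab0 : a 0 = b 0 := by
    rw [ha, hb]
    simp only [Finset.range_zero, Finset.prod_empty, one_mul, Nat.sub_zero,
      Nat.cast_zero, add_zero]
    have := prod_range_shift (fun m => U (j + m)) n hn (by
      simp only [add_zero]
      rw [show j + (n:ℤ) = j + (n:ℤ) from rfl, hUdef, extend_period])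
    rw [← this]
    exact Finset.prod_congr rfl fun i _ => by ring_nf
  have habn : a n = b n := by
    rw [ha, hb]
    simp only [Nat.sub_self, Finset.range_zero, Finset.prod_empty, mul_one]
    have := prod_range_shift (fun m => X (j + m)) n hn (by
      simp only [add_zero]
      rw [show j + (n:ℤ) = j + (n:ℤ) from rfl, hXdef, extend_period])
    rw [← this]
    exact Finset.prod_congr rfl fun i _ => by push_cast; ring_nf
  have hsucc : (n-1)+1 = n := by omega
  rw [h1, h2, h3, h4]
  exact addSum_exchange add hassoc hcomm a b (n-1) hab0 (by rw [hsucc]; exact habn)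

end AuxLemmas

/-- Theorem: if `y = f_u(x)`, then `∏_{i=1}^n (u_i + x_i)/x_i = ∏_{i=1}^n (u_i + y_i)/u_i`. -/
theorem fu_global_invariant (n : ℕ) [NeZero n] (add : K → K → K)
    (hadd_assoc : ∀ a b c : K, add (add a b) c = add a (add b c))
    (hadd_comm : ∀ a b : K, add a b = add b a)
    (hdistrib : ∀ a b c : K, a * add b c = add (a * b) (a * c))
    (u : Fin n → K)
    (x y : Fin n → K) (hy : y = fu add u x) :
    ∏ i, add (u i) (x i) / x i = ∏ i, add (u i) (y i) / u i := by
  subst hy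
  have hn : n ≠ 0 := NeZero.ne n
  set t : ℤ → K := tpoly add (extend u) (extend x) (n-1) with htdef
  have hterm : ∀ i : Fin n, add (u i) (fu add u x i) / u i
      = add (u i) (x i) * t (i:ℤ) / (extend x ((i:ℤ)+1) * t ((i:ℤ)+1)) := by
    intro i
    set β : K := extend x ((i:ℤ)+1) * t ((i:ℤ)+1) with hβ
    set α : K := extend u ((i:ℤ)-1) * t ((i:ℤ)-1) with hα
    have hfu : fu add u x i = u i * α / β := rfl
    have hkey : add α β = t (i:ℤ) * add (u i) (x i) := by
      rw [hα, hβ, htdef]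
      rw [tpoly_key add hadd_assoc hadd_comm hdistrib u x (i:ℤ)]
      rw [extend_coe, extend_coe, hdistrib]
      rw [mul_comm (u i) _, mul_comm (x i) _]
    have step1 : add (u i) (fu add u x i) = (u i / β) * add β α := by
      rw [hfu, hdistrib, div_mul_cancel, div_mul_eq_mul_div]
    rw [step1, hadd_comm β α, hkey]
    rw [div_mul_eq_mul_div, div_div, mul_comm β (u i), ← div_div,
      mul_div_cancel_left, mul_comm (t (i:ℤ))]
  rw [Finset.prod_congr rfl fun i _ => hterm i]
  rw [Finset.prod_div_distrib, Finset.prod_div_distrib, Finset.prod_mul_distrib,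
    Finset.prod_mul_distrib]
  have hx1 : ∏ i : Fin n, extend x ((i:ℤ)+1) = ∏ i, x i := by
    have h2 : ∏ i : Fin n, x i = ∏ i : Fin n, extend x (i:ℤ) :=
      Finset.prod_congr rfl fun i _ => (extend_coe x i).symm
    rw [h2, Fin.prod_univ_eq_prod_range (fun k => extend x ((k:ℤ)+1)),
      Fin.prod_univ_eq_prod_range (fun k => extend x ((k:ℕ):ℤ))]
    refine prod_range_shift (fun m => extend x m) n hn ?_
    show extend x ((n:ℕ):ℤ) = extend x 0
    rw [show ((n:ℕ):ℤ) = (0:ℤ) + (n:ℕ) by ring, extend_period]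
  have ht1 : ∏ i : Fin n, t ((i:ℤ)+1) = ∏ i : Fin n, t (i:ℤ) := by
    rw [Fin.prod_univ_eq_prod_range (fun k => t ((k:ℤ)+1)),
      Fin.prod_univ_eq_prod_range (fun k => t ((k:ℕ):ℤ))]
    refine prod_range_shift (fun m => t m) n hn ?_
    show t ((n:ℕ):ℤ) = t 0
    rw [htdef, show ((n:ℕ):ℤ) = (0:ℤ) + (n:ℕ) by ring]
    exact tpoly_period add u x (n-1) 0
  rw [hx1, ht1]
  set A := ∏ i, add (u i) (x i)
  set T := ∏ i : Fin n, t (i:ℤ)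
  set Xp := ∏ i, x i
  rw [mul_comm Xp T, ← div_div, mul_div_cancel_right]
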